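/- arXiv:2503.19184 — 2 statements merged into one kernel-verified Lean document; each statement's English description precedes it below -/
import Mathlib

section
/- Let s > 1, m > 0 and q ≥ 1 be real numbers. Then for every real n ≥ 0 one has n^{s−q} · (T_0^m(n))^q ≤ s · G_0^m(n). -/
open Real

/-- The lower-upper truncation `T_0^m`. -/
noncomputable def T0 (m n : ℝ) : ℝ :=
  if n ≤ 0 then 0 else if n ≤ m then n else m

/-- The truncation `G_0^m` of `n^s/s`. -/
noncomputable def G0 (s m n : ℝ) : ℝ :=
  if n ≤ 0 then 0
  else if n ≤ m then n ^ s / s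
  else (m / (s - 1)) * n ^ (s - 1) - m ^ s / (s * (s - 1))

/-- Comparison between the truncations: for `s > 1`, `m > 0`, `q ≥ 1` and `n ≥ 0`,
`n^{s-q} (T_0^m n)^q ≤ s G_0^m n`. -/
theorem rpow_mul_T0_rpow_le (s m q : ℝ) (hs : 1 < s) (hm : 0 < m) (hq : 1 ≤ q) :
    ∀ n : ℝ, 0 ≤ n → n ^ (s - q) * (T0 m n) ^ q ≤ s * G0 s m n := by
  intro n hn
  rcases eq_or_lt_of_le hn with h0 | h0
  · simp [T0, G0, ← h0, Real.zero_rpow (by linarith : q ≠ 0)]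
  · unfold T0 G0
    rw [if_neg (not_le.2 h0), if_neg (not_le.2 h0)]
    by_cases hnm : n ≤ m
    · rw [if_pos hnm, if_pos hnm, ← Real.rpow_add h0, sub_add_cancel,
        mul_div_cancel₀ _ (by linarith : s ≠ 0)]
    · rw [if_neg hnm, if_neg hnm]
      have hmn : m < n := not_le.1 hnm
      have hX : (0:ℝ) < n ^ (s - 1) := Real.rpow_pos_of_pos h0 _
      have h1 : m ^ q ≤ m * n ^ (q - 1) := by
        have e : m ^ q = m * m ^ (q - 1) := by
          rw [show q = 1 + (q - 1) by ring, Real.rpow_add hm, Real.rpow_one]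
          ring_nf
        rw [e]
        exact mul_le_mul_of_nonneg_left
          (Real.rpow_le_rpow hm.le hmn.le (by linarith)) hm.le
      have h2 : n ^ (s - q) * (m * n ^ (q - 1)) = m * n ^ (s - 1) := by
        rw [mul_comm m, ← mul_assoc, ← Real.rpow_add h0]
        ring_nf
      have key : m ^ s ≤ m * n ^ (s - 1) := by
        have e : m ^ s = m * m ^ (s - 1) := by
          rw [show s = 1 + (s - 1) by ring, Real.rpow_add hm, Real.rpow_one]
          ring_nf
        rw [e]
        exact mul_le_mul_of_nonneg_left
          (Real.rpow_le_rpow hm.le hmn.le (by linarith)) hm.le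
      have step1 : n ^ (s - q) * m ^ q ≤ m * n ^ (s - 1) := by
        calc n ^ (s - q) * m ^ q ≤ n ^ (s - q) * (m * n ^ (q - 1)) :=
              mul_le_mul_of_nonneg_left h1 (Real.rpow_pos_of_pos h0 _).le
          _ = m * n ^ (s - 1) := h2
      have hrhs : s * ((m / (s - 1)) * n ^ (s - 1) - m ^ s / (s * (s - 1)))
          = (s * m * n ^ (s - 1) - m ^ s) / (s - 1) := by
        have hs0 : s ≠ 0 := by linarith
        have hs1 : s - 1 ≠ 0 := by intro h; linarith [sub_eq_zero.mp h]
        field_simp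
      rw [hrhs, le_div_iff₀ (by linarith : (0:ℝ) < s - 1)]
      nlinarith [step1, key]
end

section
/- Let s ∈ (1, 2), m > 0, and ε ∈ (0, 1]. Then for every real n ≥ 0 one has G_0^m(n) · n^{s−2} · (n + ε)^{2−s} ≤ (1/s) · (n + 1)^s, with the convention that n^{s−2} = 0 at n = 0. -/
open Real

lemma G0_le (s m n : ℝ) (hs1 : 1 < s) (hm : 0 < m) (hn : 0 < n) :
    G0 s m n ≤ n ^ s / s := by
  have hs0 : 0 < s := by linarith
  have hs1' : 0 < s - 1 := by linarith
  unfold G0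
  rw [if_neg (not_le.2 hn)]
  split_ifs with h
  · exact le_refl _
  · have hconj : s.HolderConjugate (Real.conjExponent s) := .conjExponent hs1
    have hy := Real.young_inequality_of_nonneg hm.le
      (Real.rpow_nonneg hn.le (s - 1)) hconj
    have hpow : (n ^ (s - 1)) ^ Real.conjExponent s = n ^ s := by
      rw [← Real.rpow_mul hn.le]
      congr 1
      unfold Real.conjExponent
      field_simp
    rw [hpow] at hy
    unfold Real.conjExponent at hy
    have key : s * m * n ^ (s - 1) ≤ m ^ s + (s - 1) * n ^ s := by
      have h2 : m ^ s / s + n ^ s / (s / (s - 1)) = (m ^ s + (s - 1) * n ^ s) / s := by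
        field_simp
      rw [h2, le_div_iff₀ hs0] at hy
      nlinarith [hy]
    rw [show (m / (s - 1)) * n ^ (s - 1) - m ^ s / (s * (s - 1))
        = (s * m * n ^ (s - 1) - m ^ s) / (s * (s - 1)) from by field_simp]
    rw [div_le_div_iff₀ (by positivity) hs0]
    nlinarith [key]

/-- For `s ∈ (1,2)`, `m > 0`, `ε ∈ (0,1]` and `n ≥ 0`,
`G_0^m(n) n^{s-2} (n+ε)^{2-s} ≤ (1/s) (n+1)^s`
(with `n^{s-2} = 0` at `n = 0`, as given by `Real.rpow`). -/
theorem G0_mul_rpow_le (s m ε : ℝ) (hs1 : 1 < s) (hs2 : s < 2) (hm : 0 < m)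
    (hε0 : 0 < ε) (hε1 : ε ≤ 1) :
    ∀ n : ℝ, 0 ≤ n →
      G0 s m n * n ^ (s - 2) * (n + ε) ^ (2 - s) ≤ (1 / s) * (n + 1) ^ s := by
  intro n hn
  have hs0 : 0 < s := by linarith
  rcases eq_or_lt_of_le hn with h0 | h0
  · rw [← h0]
    have hG0 : G0 s m 0 = 0 := by simp [G0]
    rw [hG0]
    simp only [zero_mul]
    positivity
  · have hfac : (0:ℝ) ≤ n ^ (s - 2) * (n + ε) ^ (2 - s) := by positivity
    have hG := G0_le s m n hs1 hm h0
    calc G0 s m n * n ^ (s - 2) * (n + ε) ^ (2 - s)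
        = G0 s m n * (n ^ (s - 2) * (n + ε) ^ (2 - s)) := by ring
      _ ≤ (n ^ s / s) * (n ^ (s - 2) * (n + ε) ^ (2 - s)) :=
          mul_le_mul_of_nonneg_right hG hfac
      _ = (1 / s) * (n ^ (2 * s - 2) * (n + ε) ^ (2 - s)) := by
          have hmul : n ^ (2 * s - 2) = n ^ s * n ^ (s - 2) := by
            rw [← Real.rpow_add h0]; ring_nf
          rw [hmul]; ring
      _ ≤ (1 / s) * ((n + 1) ^ (2 * s - 2) * (n + 1) ^ (2 - s)) := by
          apply mul_le_mul_of_nonneg_left _ (by positivity)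
          apply mul_le_mul
          · exact Real.rpow_le_rpow hn (by linarith) (by linarith)
          · exact Real.rpow_le_rpow (by linarith) (by linarith) (by linarith)
          · positivity
          · positivity
      _ = (1 / s) * (n + 1) ^ s := by
          rw [← Real.rpow_add (by linarith)]
          ring_nf
end
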